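/- Let I = ℕ^k and for h ∈ {1,…,k} define (y₁,…,y_k) R_h (z₁,…,z_k) iff y_h < z_h. Define f* on H(R₁ ∪ … ∪ R_k) by f*(s) = ĥ(E(s)), where E(s) is the Erdős tree associated to s and ĥ(T) = h_k(T_α, ω·k) for T_α the tree T equipped with the decreasing labelling α. Then f* is strictly decreasing along one-step extensions: if L, L' ∈ H(R₁ ∪ … ∪ R_k) and L' ≻ L, then f*(L') < f*(L); and f* takes values in ω^k + 1. -/

import Mathlib

/-- A colored list over `I` with colors in `Fin k`: a list of elements together with a list
of colors on its edges. -/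
abbrev CL (I : Type*) (k : ℕ) := List I × List (Fin k)

/-- The empty colored list. -/
def nilCL {I : Type*} {k : ℕ} : CL I k := ([], [])

/-- A pair `(L, f)` is a genuine colored list: either both lists are empty, or there is one
color per edge, i.e. `f` has length `|L| - 1`. -/
def IsCL {I : Type*} {k : ℕ} (μ : CL I k) : Prop :=
  (μ.1 = [] ∧ μ.2 = []) ∨ μ.1.length = μ.2.length + 1

/-- `(L, f)` is an `(R₁, …, R_k)`-colored list: it is a colored list and whenever edge `i`
has color `h`, every later element is `R h`-below `x_i`. -/
def IsRCL {I : Type*} {k : ℕ} (R : Fin k → I → I → Prop) (μ : CL I k) : Prop :=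
  IsCL μ ∧ ∀ (i j : ℕ) (hi : i < μ.2.length) (hi' : i < μ.1.length)
    (hj : j < μ.1.length), i < j → R (μ.2[i]'hi) (μ.1[j]'hj) (μ.1[i]'hi')

/-- One-step extension of color `c` on colored lists: append one element, and (if the list
was nonempty) one edge of color `c`. -/
def ExtC {I : Type*} {k : ℕ} (c : Fin k) (μ' μ : CL I k) : Prop :=
  ∃ y : I, (μ.1 = [] ∧ μ' = ([y], [])) ∨
    (μ.1 ≠ [] ∧ μ'.1 = μ.1 ++ [y] ∧ μ'.2 = μ.2 ++ [c])

/-- One-step extension of some color. -/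
def ExtCol {I : Type*} {k : ℕ} (μ' μ : CL I k) : Prop := ∃ c, ExtC c μ' μ

/-- A `k`-ary tree: a set of colored lists containing the empty list, closed under removing
the last element, in which every list has at most one one-step extension of each color. -/
structure IsTree {I : Type*} {k : ℕ} (T : Set (CL I k)) : Prop where
  nil_mem : nilCL ∈ T
  downward : ∀ l m : CL I k, l ∈ T → ExtCol l m → m ∈ T
  unique : ∀ l₁ l₂ l : CL I k, ∀ c : Fin k, l₁ ∈ T → l₂ ∈ T → l ∈ T →
    ExtC c l₁ l → ExtC c l₂ l → l₁ = l₂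

/-- An Erdős tree over `R₁, …, R_k`: a `k`-ary tree all of whose members are
`(R₁, …, R_k)`-colored lists. -/
def IsErdos {I : Type*} {k : ℕ} (R : Fin k → I → I → Prop) (T : Set (CL I k)) : Prop :=
  IsTree T ∧ ∀ μ ∈ T, IsRCL R μ

/-- One-step extension of `k`-ary trees: `T' ≻₁ T` iff `T' = T ∪ {μ}` where `μ ∉ T` is a
one-step extension of some member of `T`. -/
def ExtTree {I : Type*} {k : ℕ} (T' T : Set (CL I k)) : Prop :=
  ∃ (μ l : CL I k) (c : Fin k), l ∈ T ∧ μ ∉ T ∧ ExtC c μ l ∧ T' = T ∪ {μ}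

universe u

/-- Natural (Hessenberg) operations are no longer in Mathlib; this reconstructs them with their
old meaning. `NatOrdinal` is modelled as the multiset of exponents of the Cantor normal form
(base `ω`), so that its addition (multiset union) is the natural sum. -/
abbrev NatOrdinal : Type (u + 1) := Multiset Ordinal.{u}

/-- The ordinal `ω ^ e₁ + ⋯ + ω ^ eₙ` with `e₁ ≥ ⋯ ≥ eₙ` the exponents in the multiset. -/
noncomputable def NatOrdinal.toOrdinal (m : NatOrdinal.{u}) : Ordinal.{u} :=
  ((m.sort (· ≤ ·)).reverse.map fun e => Ordinal.omega0 ^ e).sum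

/-- The multiset of exponents (with multiplicity) of the Cantor normal form of `o` in base `ω`. -/
noncomputable def Ordinal.toNatOrdinal (o : Ordinal.{u}) : NatOrdinal.{u} :=
  ((Ordinal.CNF Ordinal.omega0 o).flatMap fun p =>
    List.replicate (Cardinal.toNat p.2.card) p.1 : List Ordinal.{u})

/-- The natural (Hessenberg) sum of ordinals. -/
noncomputable def Ordinal.nadd (a b : Ordinal.{u}) : Ordinal.{u} :=
  NatOrdinal.toOrdinal (Ordinal.toNatOrdinal a + Ordinal.toNatOrdinal b)

/-- `nmulNat γ m` is the `m`-fold natural (Hessenberg) sum `γ ⊕ ⋯ ⊕ γ`. -/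
noncomputable def nmulNat (γ : Ordinal) : ℕ → Ordinal
  | 0 => 0
  | n + 1 => Ordinal.nadd (nmulNat γ n) γ

/-- Index of the last occurrence of the color `h` in `f` (meaningful when `h ∈ f`): the
position of the lowest edge of color `h`. -/
def lastIdx {k : ℕ} (f : List (Fin k)) (h : Fin k) : ℕ :=
  f.length - 1 - f.reverse.idxOf h

/-- `pval L f h` is `p^h_h`: the `h`-th component of the lowest element of `L` followed by
an edge of color `h`. -/
def pval {k : ℕ} (L : List (Fin k → ℕ)) (f : List (Fin k)) (h : Fin k) : ℕ :=
  (L.getD (lastIdx f h) (fun _ => 0)) h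

/-- The labelling `α` on (nonempty) colored lists over `I = ℕ^k`: the root `(z₁, …, z_k)`
gets `max_i (z_i + 1) ⊕ ω * (k - 1)`; a `j`-node `y` reached using exactly the colors
`h₁, …, h_j` gets `p^{h₁}_{h₁} ⊕ ⋯ ⊕ p^{h_j}_{h_j} ⊕ ω * (k - j)`, where
`y^h = (p^h_1, …, p^h_k)` is the lowest proper ancestor of `y` followed by an edge of color
`h`, `⊕` is the natural sum and `ω * m` the `m`-fold natural sum of `ω`. -/
noncomputable def labelCL {k : ℕ} (μ : CL (Fin k → ℕ) k) : Ordinal.{0} :=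
  if μ.2 = [] then
    Ordinal.nadd ((Finset.univ.sup fun i : Fin k => μ.1.headI i + 1 : ℕ) : Ordinal)
      (nmulNat Ordinal.omega0 (k - 1))
  else
    Ordinal.nadd
      (NatOrdinal.toOrdinal
        (∑ h ∈ μ.2.toFinset, Ordinal.toNatOrdinal ((pval μ.1 μ.2 h : Ordinal))))
      (nmulNat Ordinal.omega0 (k - μ.2.toFinset.card))

/-- `hNil k α = sup { hNil k β * k + 1 : β < α }`, with `* k` the `k`-fold natural sum;
the ordinal height of the set of `k`-branching trees with decreasing labels `< α`. -/
noncomputable def hNil (k : ℕ) (α : Ordinal.{0}) : Ordinal.{0} :=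
  ⨆ β : Set.Iio α, nmulNat (hNil k β.1) k + 1
termination_by α
decreasing_by exact β.2

notation:65 a:65 " ♯ " b:66 => Ordinal.nadd a b

section NatTheory
open Ordinal

lemma toOrd_eq_of_pairwise (l : List Ordinal.{0}) (hl : l.Pairwise (· ≥ ·)) :
    NatOrdinal.toOrdinal (l : NatOrdinal.{0}) = (l.map fun e => ω ^ e).sum := by
  unfold NatOrdinal.toOrdinal
  congr 2
  refine List.Perm.eq_of_pairwise' (r := (· ≥ ·)) ?_ hl ?_
  · exact List.pairwise_reverse.2 (Multiset.pairwise_sort _ _)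
  · exact (List.reverse_perm _).trans (Multiset.coe_eq_coe.1 (Multiset.sort_eq _ _))

lemma exists_sorted (m : NatOrdinal.{0}) :
    ∃ l : List Ordinal.{0}, l.Pairwise (· ≥ ·) ∧ (l : NatOrdinal.{0}) = m :=
  ⟨(m.sort (· ≤ ·)).reverse, List.pairwise_reverse.2 (Multiset.pairwise_sort m _),
    by rw [Multiset.coe_reverse, Multiset.sort_eq]⟩

lemma toOrd_add_of (m1 m2 : NatOrdinal.{0}) (h : ∀ x ∈ m1, ∀ y ∈ m2, y ≤ x) :
    NatOrdinal.toOrdinal (m1 + m2) = NatOrdinal.toOrdinal m1 + NatOrdinal.toOrdinal m2 := by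
  obtain ⟨l1, h1, rfl⟩ := exists_sorted m1
  obtain ⟨l2, h2, rfl⟩ := exists_sorted m2
  rw [Multiset.coe_add, toOrd_eq_of_pairwise _ (List.pairwise_append.2 ⟨h1, h2,
    fun x hx y hy => h x (Multiset.mem_coe.2 hx) y (Multiset.mem_coe.2 hy)⟩),
    toOrd_eq_of_pairwise _ h1, toOrd_eq_of_pairwise _ h2, List.map_append, List.sum_append]

lemma toOrd_replicate (n : ℕ) (e : Ordinal.{0}) :
    NatOrdinal.toOrdinal (Multiset.replicate n e) = ω ^ e * (n : Ordinal.{0}) := by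
  rw [← Multiset.coe_replicate, toOrd_eq_of_pairwise _ (List.pairwise_replicate.2 (Or.inr le_rfl)),
    List.map_replicate, List.sum_replicate, Ordinal.nsmul_eq_mul]

lemma toOrd_lt_of (m : NatOrdinal.{0}) (e : Ordinal.{0}) (h : ∀ x ∈ m, x < e) :
    NatOrdinal.toOrdinal m < ω ^ e := by
  obtain ⟨l, hl, rfl⟩ := exists_sorted m
  rw [toOrd_eq_of_pairwise l hl]
  clear hl
  induction l with
  | nil => simpa using Ordinal.opow_pos e Ordinal.omega0_pos
  | cons x l ih =>
    rw [List.map_cons, List.sum_cons]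
    exact Ordinal.isPrincipal_add_omega0_opow e
      ((Ordinal.opow_lt_opow_iff_right Ordinal.one_lt_omega0).2 (h x (by simp)))
      (ih (fun y hy => h y (Multiset.mem_coe.2 (List.mem_cons_of_mem _ (Multiset.mem_coe.1 hy)))))

lemma toOrd_dvd (m : NatOrdinal.{0}) (e : Ordinal.{0}) (h : ∀ x ∈ m, e ≤ x) :
    ∃ α, NatOrdinal.toOrdinal m = ω ^ e * α := by
  obtain ⟨l, hl, rfl⟩ := exists_sorted m
  rw [toOrd_eq_of_pairwise l hl]
  clear hl
  induction l with
  | nil => exact ⟨0, by simp⟩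
  | cons x l ih =>
    obtain ⟨α, hα⟩ := ih (fun y hy => h y (Multiset.mem_coe.2 (List.mem_cons_of_mem _ (Multiset.mem_coe.1 hy))))
    have hx : e ≤ x := h x (by simp)
    refine ⟨ω ^ (x - e) + α, ?_⟩
    rw [List.map_cons, List.sum_cons, hα, mul_add, ← Ordinal.opow_add,
      Ordinal.add_sub_cancel_of_le hx]

@[simp] lemma toOrd_zero : NatOrdinal.toOrdinal (0 : NatOrdinal.{0}) = 0 := by
  simp [NatOrdinal.toOrdinal]

noncomputable def gS (e x : Ordinal.{0}) : Ordinal.{0} :=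
  ω ^ e * (x / ω ^ e + 1) + x % ω ^ e

lemma gS_lt {e x y : Ordinal.{0}} (h : x < y) : gS e x < gS e y := by
  have hw : ω ^ e ≠ 0 := (Ordinal.opow_pos e Ordinal.omega0_pos).ne'
  have hd : x / ω ^ e ≤ y / ω ^ e := by
    by_contra hc
    push_neg at hc
    have h1 := Ordinal.lt_mul_succ_div y hw
    have h2 : ω ^ e * Order.succ (y / ω ^ e) ≤ ω ^ e * (x / ω ^ e) := by
      gcongr
      exact Order.succ_le_of_lt hc
    exact absurd ((h1.trans_le (h2.trans (Ordinal.mul_div_le x _))).trans h) (lt_irrefl _)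
  rcases hd.lt_or_eq with hlt | heq
  · unfold gS
    calc ω ^ e * (x / ω ^ e + 1) + x % ω ^ e < ω ^ e * (x / ω ^ e + 1) + ω ^ e := by
          gcongr; exact Ordinal.mod_lt x hw
      _ = ω ^ e * (x / ω ^ e + 1 + 1) := by rw [mul_add (ω ^ e) (x / ω ^ e + 1) 1, mul_one]
      _ ≤ ω ^ e * (y / ω ^ e + 1) := by gcongr; exact Order.add_one_le_of_lt hlt
      _ ≤ ω ^ e * (y / ω ^ e + 1) + y % ω ^ e := le_self_add
  · have hm : x % ω ^ e < y % ω ^ e := by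
      by_contra hc
      push_neg at hc
      have : y ≤ x := by
        rw [← Ordinal.div_add_mod y (ω ^ e), ← Ordinal.div_add_mod x (ω ^ e), heq]
        gcongr
      exact absurd (h.trans_le this) (lt_irrefl _)
    unfold gS
    rw [heq]
    gcongr

lemma toOrd_cons (e : Ordinal.{0}) (q : NatOrdinal.{0}) :
    NatOrdinal.toOrdinal (e ::ₘ q) = gS e (NatOrdinal.toOrdinal q) := by
  classical
  have hw : ω ^ e ≠ 0 := (Ordinal.opow_pos e Ordinal.omega0_pos).ne'
  obtain ⟨α, hα⟩ := toOrd_dvd (q.filter (fun x => e ≤ x)) e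
    (fun x hx => (Multiset.mem_filter.1 hx).2)
  have hBlt := toOrd_lt_of (q.filter (fun x => ¬ e ≤ x)) e
    (fun y hy => not_le.1 (Multiset.mem_filter.1 hy).2)
  have hAB : ∀ x ∈ q.filter (fun x => e ≤ x), ∀ y ∈ q.filter (fun x => ¬ e ≤ x), y ≤ x :=
    fun x hx y hy =>
      ((not_le.1 (Multiset.mem_filter.1 hy).2).trans_le (Multiset.mem_filter.1 hx).2).le
  have hq := Multiset.filter_add_not (fun x => e ≤ x) q
  have h1 : NatOrdinal.toOrdinal q
      = ω ^ e * α + NatOrdinal.toOrdinal (q.filter (fun x => ¬ e ≤ x)) := by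
    conv_lhs => rw [← hq]
    rw [toOrd_add_of _ _ hAB, hα]
  have hsing : NatOrdinal.toOrdinal ({e} : NatOrdinal.{0}) = ω ^ e := by
    have := toOrd_replicate 1 e
    rw [Multiset.replicate_one] at this
    rw [this]
    simp
  have hs1 : ∀ x ∈ q.filter (fun x => e ≤ x), ∀ y ∈ ({e} : NatOrdinal.{0}), y ≤ x := by
    intro x hx y hy
    rw [Multiset.mem_singleton.1 hy]
    exact (Multiset.mem_filter.1 hx).2
  have hs2 : ∀ x ∈ q.filter (fun x => e ≤ x) + {e}, ∀ y ∈ q.filter (fun x => ¬ e ≤ x),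
      y ≤ x := by
    intro x hx y hy
    rcases Multiset.mem_add.1 hx with hx | hx
    · exact hAB x hx y hy
    · rw [Multiset.mem_singleton.1 hx]
      exact (not_le.1 (Multiset.mem_filter.1 hy).2).le
  have h2 : NatOrdinal.toOrdinal (e ::ₘ q)
      = ω ^ e * α + ω ^ e + NatOrdinal.toOrdinal (q.filter (fun x => ¬ e ≤ x)) := by
    have : e ::ₘ q = (q.filter (fun x => e ≤ x) + {e}) + q.filter (fun x => ¬ e ≤ x) := by
      conv_lhs => rw [← hq]
      rw [← Multiset.singleton_add]
      abel
    rw [this, toOrd_add_of _ _ hs2, toOrd_add_of _ _ hs1, hα, hsing]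
  rw [h2, h1]
  unfold gS
  rw [Ordinal.mul_add_div _ hw _, Ordinal.div_eq_zero_of_lt hBlt, add_zero,
    Ordinal.mul_add_mod_self, Ordinal.mod_eq_of_lt hBlt, mul_add, mul_one]

lemma toOrd_add_congr (p q r : NatOrdinal.{0})
    (h : NatOrdinal.toOrdinal q = NatOrdinal.toOrdinal r) :
    NatOrdinal.toOrdinal (p + q) = NatOrdinal.toOrdinal (p + r) := by
  induction p using Multiset.induction_on with
  | empty => simpa using h
  | cons e p ih => rw [Multiset.cons_add, Multiset.cons_add, toOrd_cons, toOrd_cons, ih]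

lemma toOrd_add_lt (p q r : NatOrdinal.{0})
    (h : NatOrdinal.toOrdinal q < NatOrdinal.toOrdinal r) :
    NatOrdinal.toOrdinal (p + q) < NatOrdinal.toOrdinal (p + r) := by
  induction p using Multiset.induction_on with
  | empty => simpa using h
  | cons e p ih =>
    rw [Multiset.cons_add, Multiset.cons_add, toOrd_cons, toOrd_cons]
    exact gS_lt ih

lemma toOrd_add_congr2 {q q' r r' : NatOrdinal.{0}}
    (h1 : NatOrdinal.toOrdinal q = NatOrdinal.toOrdinal q')
    (h2 : NatOrdinal.toOrdinal r = NatOrdinal.toOrdinal r') :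
    NatOrdinal.toOrdinal (q + r) = NatOrdinal.toOrdinal (q' + r') := by
  rw [toOrd_add_congr q r r' h2, add_comm q, toOrd_add_congr r' q q' h1, add_comm]

lemma toOrd_toNat (o : Ordinal.{0}) : NatOrdinal.toOrdinal (Ordinal.toNatOrdinal o) = o := by
  have hsum : ∀ L : List (Ordinal.{0} × Ordinal.{0}), (∀ p ∈ L, p.2 < ω) →
      ((L.flatMap fun p => List.replicate (Cardinal.toNat p.2.card) p.1).map
        fun e => ω ^ e).sum = L.foldr (fun p r => ω ^ p.1 * p.2 + r) 0 := by
    intro L hL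
    induction L with
    | nil => simp
    | cons p L ih =>
      obtain ⟨n, hn⟩ := Ordinal.lt_omega0.1 (hL p (by simp))
      rw [List.flatMap_cons, List.map_append, List.sum_append,
        ih (fun q hq => hL q (by simp [hq])), List.foldr_cons, List.map_replicate,
        List.sum_replicate, Ordinal.nsmul_eq_mul, hn, Ordinal.card_nat, Cardinal.toNat_natCast]
  have hpw : ((Ordinal.CNF ω o).flatMap fun p =>
      List.replicate (Cardinal.toNat p.2.card) p.1).Pairwise (· ≥ ·) := by
    rw [List.pairwise_flatMap]
    refine ⟨fun p _ => List.pairwise_replicate.2 (Or.inr le_rfl), ?_⟩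
    have := (Ordinal.CNF.sortedGT ω o).pairwise
    rw [List.pairwise_map] at this
    refine this.imp fun hab x hx y hy => ?_
    rw [List.eq_of_mem_replicate hx, List.eq_of_mem_replicate hy]
    exact hab.le
  unfold Ordinal.toNatOrdinal
  rw [toOrd_eq_of_pairwise _ hpw, hsum _ (fun p hp => Ordinal.CNF.snd_lt Ordinal.one_lt_omega0 hp),
    Ordinal.CNF.foldr]

lemma toN_zero : Ordinal.toNatOrdinal (0 : Ordinal.{0}) = 0 := by
  unfold Ordinal.toNatOrdinal
  rw [Ordinal.CNF.zero_right]
  rfl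

lemma toOrd_add_nadd (a b : NatOrdinal.{0}) :
    NatOrdinal.toOrdinal (a + b) = Ordinal.nadd (NatOrdinal.toOrdinal a) (NatOrdinal.toOrdinal b) := by
  unfold Ordinal.nadd
  exact toOrd_add_congr2 (toOrd_toNat _).symm (toOrd_toNat _).symm

lemma toOrd_lt_imp (m : NatOrdinal.{0}) (e : Ordinal.{0}) (h : NatOrdinal.toOrdinal m < ω ^ e) :
    ∀ x ∈ m, x < e := by
  intro x hx
  by_contra hc
  push_neg at hc
  have : ω ^ x ≤ NatOrdinal.toOrdinal m := by
    rw [← Multiset.cons_erase hx, toOrd_cons]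
    unfold gS
    calc ω ^ x = ω ^ x * 1 := (mul_one _).symm
      _ ≤ ω ^ x * (NatOrdinal.toOrdinal (m.erase x) / ω ^ x + 1) := by
          gcongr
          exact le_add_self
      _ ≤ _ := le_self_add
  exact absurd (((Ordinal.opow_le_opow_right Ordinal.omega0_pos hc).trans this).trans_lt h)
    (lt_irrefl _)

lemma toN_nat (n : ℕ) : Ordinal.toNatOrdinal (n : Ordinal.{0}) = Multiset.replicate n 0 := by
  unfold Ordinal.toNatOrdinal
  rcases Nat.eq_zero_or_pos n with rfl | hn
  · simp [Ordinal.CNF.zero_right]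
  · rw [Ordinal.CNF.of_lt (by exact_mod_cast hn.ne') (Ordinal.nat_lt_omega0 n)]
    simp [Ordinal.card_nat, Multiset.coe_replicate]

lemma toOrd_sumNat {ι : Type*} (s : Finset ι) (f : ι → ℕ) :
    NatOrdinal.toOrdinal (∑ h ∈ s, Ordinal.toNatOrdinal ((f h : ℕ) : Ordinal.{0}))
      = ((∑ h ∈ s, f h : ℕ) : Ordinal.{0}) := by
  classical
  have : ∀ t : Finset ι, (∑ h ∈ t, Ordinal.toNatOrdinal ((f h : ℕ) : Ordinal.{0}))
      = Multiset.replicate (∑ h ∈ t, f h) 0 := by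
    intro t
    refine Finset.induction_on t ?_ ?_
    · simp
    · intro a t ha ih
      rw [Finset.sum_insert ha, Finset.sum_insert ha, ih, toN_nat, Multiset.replicate_add]
  rw [this, toOrd_replicate]
  simp

theorem Ordinal.nadd_comm (a b : Ordinal.{0}) : a ♯ b = b ♯ a := by
  unfold Ordinal.nadd
  rw [add_comm]

theorem Ordinal.nadd_assoc (a b c : Ordinal.{0}) : a ♯ b ♯ c = a ♯ (b ♯ c) := by
  calc a ♯ b ♯ c
      = NatOrdinal.toOrdinal (Ordinal.toNatOrdinal a + Ordinal.toNatOrdinal b)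
        ♯ NatOrdinal.toOrdinal (Ordinal.toNatOrdinal c) := by rw [toOrd_toNat c]; rfl
    _ = NatOrdinal.toOrdinal (Ordinal.toNatOrdinal a + Ordinal.toNatOrdinal b
        + Ordinal.toNatOrdinal c) := (toOrd_add_nadd _ _).symm
    _ = NatOrdinal.toOrdinal (Ordinal.toNatOrdinal a + (Ordinal.toNatOrdinal b
        + Ordinal.toNatOrdinal c)) := by rw [add_assoc]
    _ = NatOrdinal.toOrdinal (Ordinal.toNatOrdinal a)
        ♯ NatOrdinal.toOrdinal (Ordinal.toNatOrdinal b + Ordinal.toNatOrdinal c) :=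
          toOrd_add_nadd _ _
    _ = a ♯ (b ♯ c) := by rw [toOrd_toNat a]; rfl

theorem Ordinal.nadd_right_comm (a b c : Ordinal.{0}) : a ♯ b ♯ c = a ♯ c ♯ b := by
  rw [Ordinal.nadd_assoc, Ordinal.nadd_comm b, ← Ordinal.nadd_assoc]

theorem Ordinal.nadd_lt_nadd_left {b c : Ordinal.{0}} (h : b < c) (a : Ordinal.{0}) :
    a ♯ b < a ♯ c := by
  unfold Ordinal.nadd
  exact toOrd_add_lt _ _ _ (by rw [toOrd_toNat, toOrd_toNat]; exact h)

theorem Ordinal.nadd_lt_nadd_right {b c : Ordinal.{0}} (h : b < c) (a : Ordinal.{0}) :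
    b ♯ a < c ♯ a := by
  rw [Ordinal.nadd_comm b, Ordinal.nadd_comm c]
  exact Ordinal.nadd_lt_nadd_left h a

theorem Ordinal.nadd_le_nadd_left' {b c : Ordinal.{0}} (h : b ≤ c) (a : Ordinal.{0}) :
    a ♯ b ≤ a ♯ c := by
  rcases h.lt_or_eq with h | rfl
  · exact (Ordinal.nadd_lt_nadd_left h a).le
  · exact le_rfl

theorem Ordinal.nadd_le_nadd {a b c d : Ordinal.{0}} (h1 : a ≤ b) (h2 : c ≤ d) :
    a ♯ c ≤ b ♯ d :=
  (Ordinal.nadd_le_nadd_left' h2 a).trans (by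
    rw [Ordinal.nadd_comm a, Ordinal.nadd_comm b]
    exact Ordinal.nadd_le_nadd_left' h1 d)

theorem Ordinal.le_nadd_left {a b c : Ordinal.{0}} (h : a ≤ b) : a ≤ c ♯ b := by
  have h0 : (0 : Ordinal.{0}) ♯ b = b := by
    unfold Ordinal.nadd
    rw [toN_zero, zero_add, toOrd_toNat]
  calc a ≤ b := h
    _ = 0 ♯ b := h0.symm
    _ ≤ c ♯ b := Ordinal.nadd_le_nadd (zero_le (a := c)) le_rfl

end NatTheory


section OrdLemmas
open Ordinal

lemma mulNatSucc (x : Ordinal.{0}) (m : ℕ) : x * ((m+1 : ℕ) : Ordinal) = x * m + x := by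
  rw [Nat.cast_succ, mul_add, mul_one]

lemma wpos (k : ℕ) : (0:Ordinal.{0}) < Ordinal.omega0 ^ (k : Ordinal) :=
  Ordinal.opow_pos _ omega0_pos

lemma decompW {k : ℕ} {a c : Ordinal.{0}} (h : a < Ordinal.omega0 ^ (k : Ordinal) * c) :
    ∃ q r : Ordinal.{0}, q < c ∧ r < Ordinal.omega0 ^ (k : Ordinal) ∧
      a = Ordinal.omega0 ^ (k : Ordinal) * q + r := by
  refine ⟨a / _, a % _, ?_, Ordinal.mod_lt _ (wpos k).ne', (Ordinal.div_add_mod _ _).symm⟩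
  exact (Ordinal.div_lt (wpos k).ne').2 h

lemma lt_natCast' {q : Ordinal.{0}} {m : ℕ} (h : q < (m : Ordinal)) : ∃ j : ℕ, j < m ∧ q = j := by
  obtain ⟨j, rfl⟩ := Ordinal.lt_omega0.1 (h.trans_le (Ordinal.nat_lt_omega0 m).le)
  exact ⟨j, by exact_mod_cast h, rfl⟩

lemma claimC (k : ℕ) : ∀ a b : Ordinal.{0}, a < Ordinal.omega0 ^ (k : Ordinal) →
    b < Ordinal.omega0 ^ (k : Ordinal) → a ♯ b < Ordinal.omega0 ^ (k : Ordinal) := by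
  intro a b ha hb
  have ha' := toOrd_lt_imp (Ordinal.toNatOrdinal a) (k : Ordinal) (by rw [toOrd_toNat]; exact ha)
  have hb' := toOrd_lt_imp (Ordinal.toNatOrdinal b) (k : Ordinal) (by rw [toOrd_toNat]; exact hb)
  exact toOrd_lt_of _ _ (fun x hx => (Multiset.mem_add.1 hx).elim (ha' x) (hb' x))

lemma claimA (k : ℕ) (m : ℕ) : ∀ b < Ordinal.omega0.{0} ^ (k : Ordinal),
    Ordinal.omega0 ^ (k : Ordinal) * m ♯ b = Ordinal.omega0 ^ (k : Ordinal) * m + b := by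
  intro b hb
  have hb' := toOrd_lt_imp (Ordinal.toNatOrdinal b) (k : Ordinal) (by rw [toOrd_toNat]; exact hb)
  have e1 := toOrd_replicate m (k : Ordinal.{0})
  show NatOrdinal.toOrdinal (Ordinal.toNatOrdinal _ + Ordinal.toNatOrdinal b) = _
  rw [toOrd_add_congr2 (r' := Ordinal.toNatOrdinal b) (q' := Multiset.replicate m (k : Ordinal))
    (by rw [toOrd_toNat, e1]) rfl,
    toOrd_add_of _ _ (fun x hx y hy => by
      rw [Multiset.eq_of_mem_replicate hx]; exact (hb' y hy).le), e1, toOrd_toNat]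

lemma claimN (k : ℕ) (m : ℕ) :
    Ordinal.omega0.{0} ^ (k : Ordinal) * m ♯ Ordinal.omega0 ^ (k : Ordinal)
      = Ordinal.omega0 ^ (k : Ordinal) * (m+1 : ℕ) := by
  have e1 := toOrd_replicate m (k : Ordinal.{0})
  have e2 := toOrd_replicate 1 (k : Ordinal.{0})
  have e3 := toOrd_replicate (m + 1) (k : Ordinal.{0})
  show NatOrdinal.toOrdinal (Ordinal.toNatOrdinal _ + Ordinal.toNatOrdinal _) = _
  rw [toOrd_add_congr2 (q' := Multiset.replicate m (k : Ordinal))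
    (r' := Multiset.replicate 1 (k : Ordinal)) (by rw [toOrd_toNat, e1])
    (by rw [toOrd_toNat, e2]; simp), ← Multiset.replicate_add, e3]

lemma nmulNat_omega0 (j : ℕ) : nmulNat Ordinal.omega0.{0} j = Ordinal.omega0 * j := by
  induction j with
  | zero => simp [nmulNat]
  | succ j ih =>
    have h1 : Ordinal.omega0 ^ ((1:ℕ) : Ordinal) = Ordinal.omega0 := by
      rw [Nat.cast_one, Ordinal.opow_one]
    have := claimN 1 j
    rw [h1] at this
    rw [nmulNat, ih, this]

lemma nadd_natCast_lt_omega0_mul {m : ℕ} {j : ℕ} (hjk : j < m) (x : ℕ) :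
    (x : Ordinal.{0}) ♯ nmulNat Ordinal.omega0 j < Ordinal.omega0 * m := by
  have h1 : Ordinal.omega0 ^ ((1:ℕ) : Ordinal) = Ordinal.omega0 := by
    rw [Nat.cast_one, Ordinal.opow_one]
  rw [nmulNat_omega0, Ordinal.nadd_comm]
  have := claimA 1 j (x : Ordinal) (by rw [h1]; exact Ordinal.nat_lt_omega0 x)
  rw [h1] at this
  rw [this]
  calc Ordinal.omega0 * j + x < Ordinal.omega0 * j + Ordinal.omega0 :=
        add_lt_add_right (Ordinal.nat_lt_omega0 x) _
    _ = Ordinal.omega0 * (j+1:ℕ) := (mulNatSucc _ j).symm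
    _ ≤ Ordinal.omega0 * m := mul_le_mul_right
        (by exact_mod_cast Nat.cast_le.2 (by omega : j + 1 ≤ m)) _

lemma nmulNat_le_nmulNat {a b : Ordinal.{0}} (h : a ≤ b) (n : ℕ) :
    nmulNat a n ≤ nmulNat b n := by
  induction n with
  | zero => simp [nmulNat]
  | succ n ih => exact Ordinal.nadd_le_nadd ih h

lemma le_nmulNat (a : Ordinal.{0}) {n : ℕ} (hn : 0 < n) : a ≤ nmulNat a n := by
  obtain ⟨m, rfl⟩ := Nat.exists_eq_succ_of_ne_zero hn.ne'
  exact Ordinal.le_nadd_left le_rfl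

lemma nmulNat_lt_wpow {a : Ordinal.{0}} {k : ℕ} (h : a < Ordinal.omega0 ^ (k : Ordinal)) (n : ℕ) :
    nmulNat a n < Ordinal.omega0 ^ (k : Ordinal) := by
  induction n with
  | zero => simpa [nmulNat] using wpos k
  | succ n ih => exact claimC k _ _ ih h

-- hNil basic facts
lemma hNil_def (k : ℕ) (α : Ordinal.{0}) :
    hNil k α = ⨆ β : Set.Iio α, nmulNat (hNil k β.1) k + 1 := by
  rw [hNil]

lemma hNil_step {k : ℕ} {β γ : Ordinal.{0}} (h : β < γ) :
    nmulNat (hNil k β) k + 1 ≤ hNil k γ := by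
  rw [hNil_def k γ]
  exact Ordinal.le_iSup (fun b : Set.Iio γ => nmulNat (hNil k b.1) k + 1) ⟨β, h⟩

lemma hNil_le_iff {k : ℕ} {γ X : Ordinal.{0}} :
    hNil k γ ≤ X ↔ ∀ β < γ, nmulNat (hNil k β) k + 1 ≤ X := by
  constructor
  · intro h β hβ
    exact (hNil_step hβ).trans h
  · intro h
    rw [hNil_def]
    exact Ordinal.iSup_le fun β => h β.1 β.2

lemma hNil_mono {k : ℕ} {β γ : Ordinal.{0}} (h : β ≤ γ) : hNil k β ≤ hNil k γ :=
  hNil_le_iff.2 fun δ hδ => hNil_step (hδ.trans_le h)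

lemma hNil_strict {k : ℕ} (hk : 0 < k) {β γ : Ordinal.{0}} (h : β < γ) :
    hNil k β < hNil k γ :=
  lt_of_lt_of_le (lt_of_le_of_lt (le_nmulNat _ hk) (lt_add_one _)) (hNil_step h)

lemma add_one_lt_wpow {a : Ordinal.{0}} {j : ℕ} (hj : 0 < j)
    (h : a < Ordinal.omega0 ^ (j : Ordinal)) : a + 1 < Ordinal.omega0 ^ (j : Ordinal) :=
  (Ordinal.isSuccLimit_opow_left Ordinal.isSuccLimit_omega0 (by exact_mod_cast hj.ne')).succ_lt h

lemma hNil_lt_wpow {k : ℕ} (hk : 0 < k) (j : ℕ) (n : ℕ) :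
    hNil k (Ordinal.omega0 * j + n) < Ordinal.omega0 ^ ((j+1 : ℕ) : Ordinal) := by
  induction j using Nat.strong_induction_on generalizing n with
  | _ j ihj =>
    have B1 : hNil k (Ordinal.omega0 * j) ≤ Ordinal.omega0 ^ (j : Ordinal) := by
      rw [hNil_le_iff]
      intro β hβ
      obtain ⟨q, r, hq, hr, rfl⟩ := decompW (k := 1) (by
        rwa [Nat.cast_one, Ordinal.opow_one] : β < Ordinal.omega0 ^ ((1:ℕ) : Ordinal) * j)
      rw [Nat.cast_one, Ordinal.opow_one] at hr
      obtain ⟨q', hq', rfl⟩ := lt_natCast' hq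
      obtain ⟨n', rfl⟩ := Ordinal.lt_omega0.1 hr
      rw [Nat.cast_one, Ordinal.opow_one]
      have h1 : hNil k (Ordinal.omega0 * q' + n') < Ordinal.omega0 ^ ((q'+1:ℕ) : Ordinal) :=
        ihj q' hq' n'
      have h2 : hNil k (Ordinal.omega0 * q' + n') < Ordinal.omega0 ^ (j : Ordinal) :=
        h1.trans_le (Ordinal.opow_le_opow_right omega0_pos (by exact_mod_cast hq'))
      rw [Order.add_one_le_iff]
      exact nmulNat_lt_wpow h2 k
    induction n with
    | zero =>
      have h0 : (Ordinal.omega0 * j + ((0:ℕ):Ordinal)) = Ordinal.omega0 * j := by simp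
      rw [h0]
      refine B1.trans_lt ?_
      rw [Ordinal.opow_lt_opow_iff_right Ordinal.one_lt_omega0]
      exact_mod_cast Nat.lt_succ_self j
    | succ n ihn =>
      have hle : hNil k (Ordinal.omega0 * j + (n+1 : ℕ))
          ≤ nmulNat (hNil k (Ordinal.omega0 * j + n)) k + 1 := by
        rw [hNil_le_iff]
        intro β hβ
        have hβ' : β ≤ Ordinal.omega0 * j + n := by
          have : ((n+1 : ℕ) : Ordinal) = (n : Ordinal) + 1 := by push_cast; rfl
          rw [this, ← add_assoc] at hβ
          exact Order.lt_add_one_iff.1 hβ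
        exact add_le_add_left (nmulNat_le_nmulNat (hNil_mono hβ') k) 1
      refine hle.trans_lt ?_
      exact add_one_lt_wpow (by omega) (nmulNat_lt_wpow ihn k)

lemma hNil_omega0_mul_le {k : ℕ} (hk : 0 < k) :
    hNil k (Ordinal.omega0 * k) ≤ Ordinal.omega0 ^ (k : Ordinal) := by
  rw [hNil_le_iff]
  intro β hβ
  obtain ⟨q, r, hq, hr, rfl⟩ := decompW (k := 1) (by
    rwa [Nat.cast_one, Ordinal.opow_one] : β < Ordinal.omega0 ^ ((1:ℕ) : Ordinal) * k)
  rw [Nat.cast_one, Ordinal.opow_one] at hr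
  obtain ⟨q', hq', rfl⟩ := lt_natCast' hq
  obtain ⟨n', rfl⟩ := Ordinal.lt_omega0.1 hr
  rw [Nat.cast_one, Ordinal.opow_one]
  have h1 := hNil_lt_wpow hk q' n'
  have h2 : hNil k (Ordinal.omega0 * q' + n') < Ordinal.omega0 ^ (k : Ordinal) :=
    h1.trans_le (Ordinal.opow_le_opow_right omega0_pos (by exact_mod_cast hq'))
  rw [Order.add_one_le_iff]
  exact nmulNat_lt_wpow h2 k

end OrdLemmas

/-- The vacant child positions of a `k`-ary tree `T`: pairs `(l, c)` where `l` is a node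
(a nonempty member) of `T` having no one-step extension of color `c` in `T`. -/
def vacant {I : Type*} {k : ℕ} (T : Set (CL I k)) : Set (CL I k × Fin k) :=
  {p | p.1 ∈ T ∧ p.1 ≠ nilCL ∧ ¬∃ μ ∈ T, ExtC p.2 μ p.1}

/-- `hhat T = ĥ(T) = h_k(T_α, ω·k)` for an Erdős tree `T` over `ℕ^k`: for the empty tree it
is `hNil k (ω·k)`, and for a nonempty tree it is the natural sum, over all vacant child
positions of `T`, of `hNil k β` where `β` is the `α`-label of the node owning the
position. -/
noncomputable def hhat {k : ℕ} (T : Set (CL (Fin k → ℕ) k)) : Ordinal.{0} :=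
  @ite _ (∀ μ ∈ T, μ = nilCL) (Classical.dec _)
    (hNil k (Ordinal.omega0 * (k : Ordinal)))
    (NatOrdinal.toOrdinal
      (∑ᶠ p ∈ vacant T, Ordinal.toNatOrdinal (hNil k (labelCL p.1))))

/-- `H(r)`: the set of `r`-decreasing transitive finite sequences on `I`:
`⟨x₁, …, x_n⟩ ∈ H(r)` iff `i < j` implies `x_j r x_i`. -/
def HSet {I : Type*} (r : I → I → Prop) : Set (List I) :=
  {l | l.Pairwise fun a b => r b a}

open Classical in
/-- `c(r, y)`: the least color `i` with `y R_i r` (junk value if there is none). -/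
noncomputable def colOf {I : Type*} {k : ℕ} (hk : 0 < k) (R : Fin k → I → I → Prop)
    (y r : I) : Fin k :=
  if h : (Finset.univ.filter fun i => R i y r).Nonempty then
    (Finset.univ.filter fun i => R i y r).min' h
  else ⟨0, hk⟩

/-- The `c`-th immediate subtree of a `k`-ary tree with root `r`. -/
def subtreeCL {I : Type*} {k : ℕ} (T : Set (CL I k)) (r : I) (c : Fin k) :
    Set (CL I k) :=
  {μ | μ = nilCL ∨ (μ.1 ≠ [] ∧ (r :: μ.1, c :: μ.2) ∈ T)}

/-- `⟨r⟩ *_c μ`: junction of the one-element list `⟨r⟩` with the colored list `μ` by an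
edge of color `c`. -/
def consCL {I : Type*} {k : ℕ} (r : I) (c : Fin k) : CL I k → CL I k
  | ([], _) => ([r], [])
  | (x :: L, f) => (r :: x :: L, c :: f)

open Classical in
/-- `h(T, y)` computed with fuel: `h(empty tree, y) = ⟨y⟩` and, if `T` has root `r` and
`i = c(r, y)`, `h(T, y) = ⟨r⟩ *_i h(T_i, y)`.  The fuel argument only has to exceed the
depth of `T` for this to agree with the recursive definition. -/
noncomputable def hLeaf {I : Type*} {k : ℕ} (hk : 0 < k) (R : Fin k → I → I → Prop) :
    ℕ → Set (CL I k) → I → CL I k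
  | 0, _, y => ([y], [])
  | n + 1, T, y =>
    if h : ∃ r : I, (([r], []) : CL I k) ∈ T then
      let r := Classical.choose h
      let c := colOf hk R y r
      consCL r c (hLeaf hk R n (subtreeCL T r c) y)
    else ([y], [])

/-- The Erdős tree `E(L)` associated to a homogeneous sequence, by recursion on the
reversed list. -/
noncomputable def ErecAux {I : Type*} {k : ℕ} (hk : 0 < k) (R : Fin k → I → I → Prop) :
    List I → Set (CL I k)
  | [] => {nilCL}
  | y :: L => ErecAux hk R L ∪ {hLeaf hk R (L.length + 1) (ErecAux hk R L) y}

/-- The map `E` from finite sequences to Erdős trees: `E(⟨⟩) = {nil}` and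
`E(L ⌢ ⟨y⟩) = E(L) ∪ {h(E(L), y)}`. -/
noncomputable def Etree {I : Type*} {k : ℕ} (hk : 0 < k) (R : Fin k → I → I → Prop)
    (L : List I) : Set (CL I k) :=
  ErecAux hk R L.reverse


section Descent

variable {I : Type} {k : ℕ} (hk : 0 < k) (R : Fin k → I → I → Prop)

lemma colOf_rel {y r : I} (h : ∃ i, R i y r) : R (colOf hk R y r) y r := by
  classical
  have hne : (Finset.univ.filter fun i => R i y r).Nonempty := by
    obtain ⟨i, hi⟩ := h
    exact ⟨i, Finset.mem_filter.2 ⟨Finset.mem_univ _, hi⟩⟩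
  rw [colOf, dif_pos hne]
  have := Finset.min'_mem _ hne
  exact (Finset.mem_filter.1 this).2

lemma consCL_nonempty (r : I) (c : Fin k) (x : I) (L : List I) (f : List (Fin k)) :
    consCL r c (x :: L, f) = (r :: x :: L, c :: f) := rfl

lemma nilCL_first {I : Type*} {μ : CL I k} (hcl : IsCL μ) (h : μ.1 = []) : μ = nilCL := by
  rcases hcl with ⟨h1, h2⟩ | h1
  · obtain ⟨a, b⟩ := μ; simp_all [nilCL]
  · rw [h] at h1; simp at h1

lemma hLeaf_spec : ∀ (n : ℕ) (T : Set (CL I k)) (y : I),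
    nilCL ∈ T → (∀ μ ∈ T, IsCL μ) → (∀ μ ∈ T, μ.1.length ≤ n) →
    (∀ μ ∈ T, ∀ z ∈ μ.1, ∃ i, R i y z) →
    ∃ (l : CL I k) (c : Fin k), l ∈ T ∧
      ((l = nilCL ∧ hLeaf hk R n T y = ([y], [])) ∨
        (l.1 ≠ [] ∧ hLeaf hk R n T y = (l.1 ++ [y], l.2 ++ [c]))) ∧
      (¬ ∃ μ ∈ T, ExtC c μ l) ∧
      (∀ (i : ℕ) (hi : i < (hLeaf hk R n T y).2.length)
        (hi' : i < (hLeaf hk R n T y).1.length),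
        (hLeaf hk R n T y).2[i]'hi = colOf hk R y ((hLeaf hk R n T y).1[i]'hi')) := by
  intro n
  induction n with
  | zero =>
    intro T y hnil hcl hbd _
    refine ⟨nilCL, ⟨0, hk⟩, hnil, Or.inl ⟨rfl, rfl⟩, ?_, ?_⟩
    · rintro ⟨μ, hμT, hext⟩
      obtain ⟨y', hy'⟩ := hext
      rcases hy' with ⟨-, rfl⟩ | ⟨hne, -⟩
      · have := hbd _ hμT; simp at this
      · exact hne rfl
    · intro i hi hi'
      simp [hLeaf] at hi
  | succ n IH =>
    intro T y hnil hcl hbd hyrel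
    by_cases h : ∃ r : I, (([r], []) : CL I k) ∈ T
    · have hν : hLeaf hk R (n+1) T y =
          consCL (Classical.choose h) (colOf hk R y (Classical.choose h))
            (hLeaf hk R n
              (subtreeCL T (Classical.choose h) (colOf hk R y (Classical.choose h))) y) := by
        rw [hLeaf, dif_pos h]
      set r := Classical.choose h with hr
      have hrT : (([r], []) : CL I k) ∈ T := Classical.choose_spec h
      set c := colOf hk R y r with hc
      set T' := subtreeCL T r c with hT'
      have hnil' : nilCL ∈ T' := Or.inl rfl
      have hcl' : ∀ μ ∈ T', IsCL μ := by
        rintro μ (rfl | ⟨hne, hmem⟩)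
        · exact Or.inl ⟨rfl, rfl⟩
        · have := hcl _ hmem
          rcases this with ⟨h1, -⟩ | h1
          · simp at h1
          · right; simpa using h1
      have hbd' : ∀ μ ∈ T', μ.1.length ≤ n := by
        rintro μ (rfl | ⟨hne, hmem⟩)
        · simp [nilCL]
        · have := hbd _ hmem; simpa using this
      have hyrel' : ∀ μ ∈ T', ∀ z ∈ μ.1, ∃ i, R i y z := by
        rintro μ (rfl | ⟨hne, hmem⟩)
        · simp [nilCL]
        · intro z hz
          exact hyrel _ hmem z (List.mem_cons_of_mem _ hz)
      obtain ⟨l', c', hl'T, hshape, hnoext, hcolor⟩ := IH T' y hnil' hcl' hbd' hyrel'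
      rcases hshape with ⟨rfl, hν'eq⟩ | ⟨hne, hν'eq⟩
      · -- ν' = ([y],[]) : new leaf is ([r,y],[c])
        have hνeq : hLeaf hk R (n+1) T y = ([r, y], [c]) := by
          rw [hν, hν'eq]; rfl
        refine ⟨([r], []), c, hrT, Or.inr ⟨by simp, by simpa using hνeq⟩, ?_, ?_⟩
        · rintro ⟨μ, hμT, hext⟩
          obtain ⟨y', hy'⟩ := hext
          rcases hy' with ⟨h1, -⟩ | ⟨-, h1, h2⟩
          · simp at h1
          · apply hnoext
            refine ⟨([y'], []), Or.inr ⟨by simp, ?_⟩, ⟨y', Or.inl ⟨rfl, rfl⟩⟩⟩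
            have : μ = ([r, y'], [c]) := by
              obtain ⟨a, b⟩ := μ; simp at h1 h2; simp [h1, h2]
            rwa [this] at hμT
        · intro i hi hi'
          simp only [hνeq] at hi ⊢
          simp only [List.length_singleton] at hi
          interval_cases i
          · simp [hνeq, hc]
      · -- ν' = (l'.1 ++ [y], l'.2 ++ [c'])
        have hl'mem : (r :: l'.1, c :: l'.2) ∈ T := by
          rcases hl'T with rfl | ⟨-, hmem⟩
          · exact absurd rfl hne
          · exact hmem
        obtain ⟨x, L', hx⟩ : ∃ x L'', l'.1 = x :: L'' := by
          cases hxx : l'.1 with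
          | nil => exact absurd hxx hne
          | cons a b => exact ⟨a, b, rfl⟩
        have hνeq : hLeaf hk R (n+1) T y =
            ((r :: l'.1) ++ [y], (c :: l'.2) ++ [c']) := by
          rw [hν, hν'eq, hx]
          rfl
        refine ⟨(r :: l'.1, c :: l'.2), c', hl'mem, Or.inr ⟨by simp, hνeq⟩, ?_, ?_⟩
        · rintro ⟨μ, hμT, hext⟩
          obtain ⟨y', hy'⟩ := hext
          rcases hy' with ⟨h1, -⟩ | ⟨-, h1, h2⟩
          · simp at h1
          · apply hnoext
            refine ⟨(l'.1 ++ [y'], l'.2 ++ [c']), Or.inr ⟨by simp [hx], ?_⟩,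
              ⟨y', Or.inr ⟨hne, rfl, rfl⟩⟩⟩
            have : μ = (r :: (l'.1 ++ [y']), c :: (l'.2 ++ [c'])) := by
              obtain ⟨a, b⟩ := μ; simp at h1 h2; simp [h1, h2]
            rwa [this] at hμT
        · intro i hi hi'
          simp only [hνeq] at hi hi' ⊢
          match i with
          | 0 => simpa using hc
          | (i+1) =>
            simp only [List.cons_append, List.length_cons, Nat.add_lt_add_iff_right] at hi hi'
            simp only [hν'eq] at hcolor
            have := hcolor i (by simpa using hi) (by simpa using hi')
            simpa using this
    · have hνeq : hLeaf hk R (n+1) T y = ([y], []) := by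
        rw [hLeaf, dif_neg h]
      refine ⟨nilCL, ⟨0, hk⟩, hnil, Or.inl ⟨rfl, hνeq⟩, ?_, ?_⟩
      · rintro ⟨μ, hμT, hext⟩
        obtain ⟨y', hy'⟩ := hext
        rcases hy' with ⟨-, rfl⟩ | ⟨hne, -⟩
        · exact h ⟨y', hμT⟩
        · exact hne rfl
      · intro i hi hi'
        rw [hνeq] at hi
        simp at hi

end Descent

section Erec

variable {I : Type} {k : ℕ} (hk : 0 < k) (R : Fin k → I → I → Prop)

lemma erecAux_cons (y : I) (M : List I) :
    ErecAux hk R (y :: M) =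
      ErecAux hk R M ∪ {hLeaf hk R (M.length + 1) (ErecAux hk R M) y} := by
  rw [ErecAux]

lemma ErecAux_inv : ∀ (M : List I), M.Pairwise (fun a b => ∃ i, R i a b) →
    nilCL ∈ ErecAux hk R M ∧
    (ErecAux hk R M).Finite ∧
    (∀ μ ∈ ErecAux hk R M, IsCL μ) ∧
    (∀ μ ∈ ErecAux hk R M, IsRCL R μ) ∧
    (∀ μ ∈ ErecAux hk R M, μ.1.length ≤ M.length) ∧
    (∀ μ ∈ ErecAux hk R M, ∀ z ∈ μ.1, z ∈ M) := by
  intro M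
  induction M with
  | nil =>
    intro _
    refine ⟨rfl, Set.finite_singleton _, ?_, ?_, ?_, ?_⟩ <;>
      rintro μ (rfl : μ = nilCL)
    · exact Or.inl ⟨rfl, rfl⟩
    · exact ⟨Or.inl ⟨rfl, rfl⟩, by intro i j hi; simp [nilCL] at hi⟩
    · simp [nilCL]
    · simp [nilCL]
  | cons y M IH =>
    intro hp
    have hpM : M.Pairwise (fun a b => ∃ i, R i a b) := (List.pairwise_cons.1 hp).2
    have hyM : ∀ x ∈ M, ∃ i, R i y x := (List.pairwise_cons.1 hp).1
    obtain ⟨hnil, hfin, hcl, hrcl, hbd, helems⟩ := IH hpM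
    set T := ErecAux hk R M with hT
    have hyrel : ∀ μ ∈ T, ∀ z ∈ μ.1, ∃ i, R i y z :=
      fun μ hμ z hz => hyM z (helems μ hμ z hz)
    obtain ⟨l, c, hlT, hshape, hnoext, hcolor⟩ :=
      hLeaf_spec hk R (M.length + 1) T y hnil hcl
        (fun μ hμ => (hbd μ hμ).trans (Nat.le_succ _)) hyrel
    set ν := hLeaf hk R (M.length + 1) T y with hν
    rw [erecAux_cons]
    have hcases : ∀ μ : CL I k, μ ∈ T ∪ {ν} → μ ∈ T ∨ μ = ν := by
      intro μ hμ
      rcases hμ with hμ | hμ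
      · exact Or.inl hμ
      · exact Or.inr hμ
    -- shape facts about ν
    have hν1 : ν.1 = l.1 ++ [y] := by
      rcases hshape with ⟨rfl, hνeq⟩ | ⟨hne, hνeq⟩
      · rw [hνeq]; rfl
      · rw [hνeq]
    have hνcl : IsCL ν := by
      rcases hshape with ⟨rfl, hνeq⟩ | ⟨hne, hνeq⟩
      · rw [hνeq]; exact Or.inr rfl
      · rw [hνeq]
        right
        rcases hcl l hlT with ⟨h1, -⟩ | h1
        · exact absurd h1 hne
        · simp [h1]
    refine ⟨Or.inl hnil, hfin.union (Set.finite_singleton _), ?_, ?_, ?_, ?_⟩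
    · intro μ hμ
      rcases hcases μ hμ with hμ | rfl
      · exact hcl μ hμ
      · exact hνcl
    · intro μ hμ
      rcases hcases μ hμ with hμ | rfl
      · exact hrcl μ hμ
      · rcases hshape with ⟨rfl, hνeq⟩ | ⟨hne, hνeq⟩
        · rw [hνeq]
          refine ⟨Or.inr rfl, ?_⟩
          intro i j hi
          simp at hi
        · have hlen : l.1.length = l.2.length + 1 := by
            rcases hcl l hlT with ⟨h1, -⟩ | h1
            · exact absurd h1 hne
            · exact h1
          rw [hνeq]
          refine ⟨hνeq ▸ hνcl, ?_⟩
          intro i j hi hi' hj hij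
          have hrcll := (hrcl l hlT).2
          simp only [List.length_append, List.length_cons, List.length_nil] at hi hi' hj
          by_cases hjlt : j < l.1.length
          · have hilt2 : i < l.2.length := by omega
            have hilt1 : i < l.1.length := by omega
            rw [List.getElem_append_left hilt2, List.getElem_append_left hjlt,
              List.getElem_append_left hilt1]
            exact hrcll i j hilt2 hilt1 hjlt hij
          · have hj' : j = l.1.length := by omega
            have hilt1 : i < l.1.length := by omega
            have hyj : (l.1 ++ [y])[j]'(by simp; omega) = y := by
              subst hj'
              simp
            rw [hyj, List.getElem_append_left hilt1]
            have hcc := hcolor i (by rw [hνeq]; simpa using hi) (by rw [hνeq]; simp; omega)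
            simp only [hνeq] at hcc
            have hgi : ((l.2 ++ [c])[i]'(by simpa using hi)) =
                colOf hk R y ((l.1 ++ [y])[i]'(by simp; omega)) := by
              simpa using hcc
            rw [List.getElem_append_left hilt1] at hgi
            rw [hgi]
            apply colOf_rel
            apply hyrel l hlT
            exact List.getElem_mem hilt1
    · intro μ hμ
      rcases hcases μ hμ with hμ | rfl
      · exact (hbd μ hμ).trans (by simp)
      · rw [hν1]
        simp only [List.length_append, List.length_cons, List.length_singleton]
        have := hbd l hlT
        simpa using this
    · intro μ hμ z hz
      rcases hcases μ hμ with hμ | rfl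
      · exact List.mem_cons_of_mem _ (helems μ hμ z hz)
      · rw [hν1] at hz
        rcases List.mem_append.1 hz with hz | hz
        · exact List.mem_cons_of_mem _ (helems l hlT z hz)
        · simp at hz
          simp [hz]

lemma ErecAux_singleton : ∀ (M : List I), M ≠ [] → ∃ r : I, (([r],[]) : CL I k) ∈ ErecAux hk R M := by
  intro M
  induction M with
  | nil => intro h; exact absurd rfl h
  | cons y M IH =>
    intro _
    rw [erecAux_cons]
    by_cases hM : M = []
    · subst hM
      refine ⟨y, Or.inr ?_⟩
      have : hLeaf hk R 1 (ErecAux hk R []) y = ([y], []) := by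
        rw [hLeaf]
        rw [dif_neg]
        rintro ⟨r, hr⟩
        have : (([r],[]) : CL I k) = nilCL := hr
        simp [nilCL] at this
      simp [this]
    · obtain ⟨r, hr⟩ := IH hM
      exact ⟨r, Or.inl hr⟩

end Erec

section Label

open Ordinal

variable {k : ℕ}

lemma toOrdinal_add (a b : NatOrdinal.{0}) :
    NatOrdinal.toOrdinal (a + b) = NatOrdinal.toOrdinal a ♯ NatOrdinal.toOrdinal b := by
  exact toOrd_add_nadd a b

lemma toOrdinal_nsmul (x : NatOrdinal.{0}) (n : ℕ) :
    NatOrdinal.toOrdinal (n • x) = nmulNat (NatOrdinal.toOrdinal x) n := by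
  induction n with
  | zero => simp [nmulNat]
  | succ n ih => rw [succ_nsmul, toOrdinal_add, ih, nmulNat]

lemma lastIdx_append_self (B : List (Fin k)) (c : Fin k) :
    lastIdx (B ++ [c]) c = B.length := by
  unfold lastIdx
  rw [List.reverse_append]
  simp [List.idxOf_cons_self]

lemma lastIdx_append_ne {B : List (Fin k)} {c h : Fin k} (hne : h ≠ c) :
    lastIdx (B ++ [c]) h = lastIdx B h := by
  unfold lastIdx
  rw [List.reverse_append]
  have : List.idxOf h ([c].reverse ++ B.reverse) = List.idxOf h (c :: B.reverse) := by simp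
  rw [this, List.idxOf_cons_ne _ (Ne.symm hne)]
  simp only [List.length_append, List.length_cons, List.length_nil, List.length_reverse]
  omega

lemma lastIdx_lt {B : List (Fin k)} {h : Fin k} (hB : B ≠ []) :
    lastIdx B h < B.length := by
  unfold lastIdx
  have : 0 < B.length := List.length_pos_iff.2 hB
  omega

lemma lastIdx_getElem {B : List (Fin k)} {h : Fin k} (hmem : h ∈ B) :
    B[lastIdx B h]'(lastIdx_lt (List.ne_nil_of_mem hmem)) = h := by
  have hmem' : h ∈ B.reverse := List.mem_reverse.2 hmem
  have hidx : List.idxOf h B.reverse < B.reverse.length := List.idxOf_lt_length_iff.2 hmem'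
  have := List.getElem_idxOf hidx
  rw [List.getElem_reverse] at this
  exact this

lemma pval_append_self {A : List (Fin k → ℕ)} {y : Fin k → ℕ} {B : List (Fin k)} {c : Fin k}
    (hlen : A.length = B.length + 1) :
    pval (A ++ [y]) (B ++ [c]) c = (A[B.length]'(by omega)) c := by
  unfold pval
  rw [lastIdx_append_self, List.getD_append _ _ _ _ (by omega),
    List.getD_eq_getElem _ _ (by omega)]

lemma pval_append_ne {A : List (Fin k → ℕ)} {y : Fin k → ℕ} {B : List (Fin k)} {c h : Fin k}
    (hlen : A.length = B.length + 1) (hne : h ≠ c) :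
    pval (A ++ [y]) (B ++ [c]) h = pval A B h := by
  unfold pval
  rw [lastIdx_append_ne hne]
  have hlt : lastIdx B h < A.length := by
    unfold lastIdx; omega
  rw [List.getD_append _ _ _ _ hlt]

lemma labelCL_lt (hk : 0 < k) {R : Fin k → (Fin k → ℕ) → (Fin k → ℕ) → Prop}
    (hR : ∀ (h : Fin k) (y z : Fin k → ℕ), R h y z ↔ y h < z h)
    {l : CL (Fin k → ℕ) k} {y : Fin k → ℕ} {c : Fin k}
    (hlen : l.1.length = l.2.length + 1)
    (hrcl : IsRCL R (l.1 ++ [y], l.2 ++ [c])) :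
    labelCL (l.1 ++ [y], l.2 ++ [c]) < labelCL l := by
  classical
  obtain ⟨A, B⟩ := l
  simp only at hlen hrcl ⊢
  have hxval : pval (A ++ [y]) (B ++ [c]) c = (A[B.length]'(by omega)) c :=
    pval_append_self hlen
  have hνne : (B ++ [c] : List (Fin k)) ≠ [] := by simp
  rcases eq_or_ne B [] with rfl | hB
  · -- root case
    obtain ⟨x, rfl⟩ := List.length_eq_one_iff.1 (by simpa using hlen)
    rw [labelCL, if_neg (by simpa using hνne), labelCL, if_pos rfl]
    have htf : (([] : List (Fin k)) ++ [c]).toFinset = {c} := by simp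
    rw [htf]
    simp only [Finset.sum_singleton, Finset.card_singleton]
    have hx : pval ([x] ++ [y]) ([] ++ [c]) c = x c := by rw [hxval]; simp
    rw [hx]
    apply Ordinal.nadd_lt_nadd_right
    have hsup : x c < Finset.univ.sup fun i : Fin k => ([x].headI : Fin k → ℕ) i + 1 := by
      have := Finset.le_sup (f := fun i : Fin k => ([x].headI : Fin k → ℕ) i + 1)
        (Finset.mem_univ c)
      simp only [List.headI] at this ⊢
      omega
    calc NatOrdinal.toOrdinal (Ordinal.toNatOrdinal ((x c : ℕ) : Ordinal))
        = ((x c : ℕ) : Ordinal) := toOrd_toNat _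
      _ < _ := by exact_mod_cast hsup
  · -- non-root
    rw [labelCL, if_neg (by simpa using hνne), labelCL, if_neg hB]
    simp only
    have hBlen : 0 < B.length := List.length_pos_iff.2 hB
    have hstrictm : pval (A ++ [y]) (B ++ [c]) c < pval A B c → True := fun _ => trivial
    by_cases hc : c ∈ B.toFinset
    · have hstrict : pval (A ++ [y]) (B ++ [c]) c < pval A B c := by
        rw [hxval]
        have hlast : lastIdx B c < B.length := lastIdx_lt hB
        have hBh : B[lastIdx B c]'hlast = c := lastIdx_getElem (by simpa using hc)
        have hr := hrcl.2 (lastIdx B c) B.length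
          (by simp; omega) (by simp; omega) (by simp; omega) hlast
        rw [List.getElem_append_left hlast,
          List.getElem_append_left (by omega : lastIdx B c < A.length),
          List.getElem_append_left (by omega : B.length < A.length), hBh] at hr
        have := (hR _ _ _).1 hr
        unfold pval
        rw [List.getD_eq_getElem _ _ (by omega : lastIdx B c < A.length)]
        exact this
      have htf : (B ++ [c]).toFinset = B.toFinset := by
        rw [List.toFinset_append]
        simp only [List.toFinset_cons, List.toFinset_nil, LawfulSingleton.insert_empty_eq]
        rw [Finset.union_eq_left]
        simpa using hc
      rw [htf]
      apply Ordinal.nadd_lt_nadd_right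
      have hsumlt : NatOrdinal.toOrdinal (∑ h ∈ B.toFinset,
            Ordinal.toNatOrdinal ((pval (A ++ [y]) (B ++ [c]) h : ℕ) : Ordinal))
          < NatOrdinal.toOrdinal
            (∑ h ∈ B.toFinset, Ordinal.toNatOrdinal ((pval A B h : ℕ) : Ordinal)) := by
        rw [toOrd_sumNat, toOrd_sumNat]
        have hlt : (∑ h ∈ B.toFinset, pval (A ++ [y]) (B ++ [c]) h)
            < ∑ h ∈ B.toFinset, pval A B h := by
          apply Finset.sum_lt_sum
          · intro h hmem
            by_cases hne : h = c
            · subst hne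
              exact le_of_lt hstrict
            · rw [pval_append_ne hlen hne]
          · exact ⟨c, hc, hstrict⟩
        exact_mod_cast hlt
      exact hsumlt
    · -- new color
      have htf : (B ++ [c]).toFinset = insert c B.toFinset := by
        rw [List.toFinset_append]
        simp only [List.toFinset_cons, List.toFinset_nil, LawfulSingleton.insert_empty_eq]
        rw [Finset.union_comm]
        exact Finset.insert_eq c B.toFinset |>.symm
      rw [htf]
      have hcard : (insert c B.toFinset).card = B.toFinset.card + 1 :=
        Finset.card_insert_of_notMem hc
      rw [hcard]
      have hjk : B.toFinset.card + 1 ≤ k := by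
        have := Finset.card_le_univ (insert c B.toFinset)
        rw [hcard] at this
        simpa using this
      have hsum : (∑ h ∈ insert c B.toFinset,
            Ordinal.toNatOrdinal ((pval (A ++ [y]) (B ++ [c]) h : ℕ) : Ordinal))
          = Ordinal.toNatOrdinal ((pval (A ++ [y]) (B ++ [c]) c : ℕ) : Ordinal) +
            ∑ h ∈ B.toFinset, Ordinal.toNatOrdinal ((pval A B h : ℕ) : Ordinal) := by
        rw [Finset.sum_insert hc]
        congr 1
        apply Finset.sum_congr rfl
        intro h hmem
        rw [pval_append_ne hlen (by rintro rfl; exact hc hmem)]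
      rw [hsum, toOrdinal_add]
      set S := NatOrdinal.toOrdinal
        (∑ h ∈ B.toFinset, Ordinal.toNatOrdinal ((pval A B h : ℕ) : Ordinal)) with hS
      have hkj : k - B.toFinset.card = (k - (B.toFinset.card + 1)) + 1 := by omega
      rw [hkj]
      have hP : NatOrdinal.toOrdinal
            (Ordinal.toNatOrdinal ((pval (A ++ [y]) (B ++ [c]) c : ℕ) : Ordinal))
          = ((pval (A ++ [y]) (B ++ [c]) c : ℕ) : Ordinal) := toOrd_toNat _
      rw [hP, Ordinal.nadd_comm _ S, Ordinal.nadd_right_comm,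
        show nmulNat Ordinal.omega0 (k - (B.toFinset.card + 1) + 1)
          = nmulNat Ordinal.omega0 (k - (B.toFinset.card + 1)) ♯ Ordinal.omega0 from rfl,
        ← Ordinal.nadd_assoc]
      exact Ordinal.nadd_lt_nadd_left (Ordinal.nat_lt_omega0 _) _
end Label

section Main

open Ordinal

variable {k : ℕ}

lemma vacant_finite {I : Type} {T : Set (CL I k)} (hfin : T.Finite) : (vacant T).Finite :=
  (hfin.prod Set.finite_univ).subset fun p hp => ⟨hp.1, trivial⟩

lemma main_step (hk : 0 < k) {R : Fin k → (Fin k → ℕ) → (Fin k → ℕ) → Prop}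
    (hR : ∀ (h : Fin k) (y z : Fin k → ℕ), R h y z ↔ y h < z h)
    (M : List (Fin k → ℕ)) (y : Fin k → ℕ)
    (hp : (y :: M).Pairwise (fun a b => ∃ i, R i a b)) :
    hhat (ErecAux hk R (y :: M)) < hhat (ErecAux hk R M) := by
  classical
  have hpM : M.Pairwise (fun a b => ∃ i, R i a b) := (List.pairwise_cons.1 hp).2
  have hyM : ∀ x ∈ M, ∃ i, R i y x := (List.pairwise_cons.1 hp).1
  obtain ⟨hnil, hfin, hcl, hrcl, hbd, helems⟩ := ErecAux_inv hk R M hpM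
  set T := ErecAux hk R M with hT
  have hyrel : ∀ μ ∈ T, ∀ z ∈ μ.1, ∃ i, R i y z :=
    fun μ hμ z hz => hyM z (helems μ hμ z hz)
  obtain ⟨l, c, hlT, hshape, hnoext, hcolor⟩ :=
    hLeaf_spec hk R (M.length + 1) T y hnil hcl
      (fun μ hμ => (hbd μ hμ).trans (Nat.le_succ _)) hyrel
  set ν := hLeaf hk R (M.length + 1) T y with hν
  have hcons : ErecAux hk R (y :: M) = T ∪ {ν} := erecAux_cons hk R y M
  have hν1 : ν.1 = l.1 ++ [y] := by
    rcases hshape with ⟨rfl, hνeq⟩ | ⟨hne, hνeq⟩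
    · rw [hνeq]; rfl
    · rw [hνeq]
  have hynotM : y ∉ M := by
    intro hmem
    obtain ⟨i, hi⟩ := hyM y hmem
    exact absurd ((hR i y y).1 hi) (lt_irrefl _)
  have hνnotT : ν ∉ T := by
    intro hin
    exact hynotM (helems ν hin y (by rw [hν1]; simp))
  have hνnotnil : ν ≠ nilCL := by
    intro h
    have : ν.1 = [] := by rw [h]; rfl
    rw [hν1] at this; simp at this
  -- no member of T ∪ {ν} extends ν
  have hnoextν : ∀ c'' : Fin k, ¬∃ μ ∈ T ∪ {ν}, ExtC c'' μ ν := by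
    rintro c'' ⟨μ, hμ, y', hcase⟩
    have hν1ne : ν.1 ≠ [] := by rw [hν1]; simp
    rcases hcase with ⟨h1, -⟩ | ⟨-, h1, -⟩
    · exact hν1ne h1
    · rcases hμ with hμ | hμ
      · refine hynotM (helems μ hμ y ?_)
        rw [h1, hν1]
        simp
      · have : μ.1.length = ν.1.length + 1 := by rw [h1]; simp
        rw [show μ = ν from hμ] at this
        omega
  rcases eq_or_ne M [] with rfl | hM
  · -- base case : T = {nilCL}
    have hTnil : T = {nilCL} := rfl
    have hlnil : l = nilCL := by rw [hTnil] at hlT; exact hlT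
    have hνeq : ν = ([y], []) := by
      rcases hshape with ⟨-, hνeq⟩ | ⟨hne, -⟩
      · exact hνeq
      · rw [hlnil] at hne; exact absurd rfl hne
    have hhatT : hhat T = hNil k (Ordinal.omega0 * (k : Ordinal)) := by
      rw [hhat, if_pos]
      rintro μ (rfl : μ = nilCL)
      rfl
    have hT'fin : (T ∪ {ν} : Set (CL (Fin k → ℕ) k)).Finite :=
      hfin.union (Set.finite_singleton _)
    have hvac : vacant (T ∪ {ν}) = {ν} ×ˢ (Set.univ : Set (Fin k)) := by
      ext ⟨m, c''⟩
      simp only [vacant, Set.mem_setOf_eq, Set.mem_prod, Set.mem_singleton_iff,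
        Set.mem_univ, and_true]
      constructor
      · rintro ⟨hm, hmnil, -⟩
        rcases hm with hm | hm
        · exact absurd (by rw [hTnil] at hm; exact hm) hmnil
        · exact hm
      · rintro rfl
        exact ⟨Or.inr rfl, hνnotnil, hnoextν c''⟩
    have hhatT' : hhat (T ∪ {ν}) =
        NatOrdinal.toOrdinal (k • Ordinal.toNatOrdinal (hNil k (labelCL ν))) := by
      rw [hhat, if_neg]
      · congr 1
        rw [finsum_mem_eq_finite_toFinset_sum _ (vacant_finite hT'fin)]
        have hfs : (vacant_finite hT'fin).toFinset =
            ({ν} : Finset (CL (Fin k → ℕ) k)) ×ˢ (Finset.univ : Finset (Fin k)) := by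
          apply Finset.ext
          intro p
          rw [Set.Finite.mem_toFinset, hvac]
          simp only [Set.mem_prod, Finset.mem_product, Set.mem_singleton_iff,
            Finset.mem_singleton, Set.mem_univ, Finset.mem_univ, and_true]
        rw [hfs, Finset.sum_product, Finset.sum_singleton]
        simp [Finset.sum_const, Fintype.card_fin]
      · intro hall
        exact hνnotnil (hall ν (Or.inr rfl))
    rw [hcons, hhatT, hhatT']
    have hlab : labelCL ν < Ordinal.omega0 * (k : Ordinal) := by
      rw [hνeq, labelCL, if_pos rfl]
      exact nadd_natCast_lt_omega0_mul (by omega) _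
    calc NatOrdinal.toOrdinal (k • Ordinal.toNatOrdinal (hNil k (labelCL ν)))
        = nmulNat (hNil k (labelCL ν)) k := by
          rw [toOrdinal_nsmul, toOrd_toNat]
      _ < nmulNat (hNil k (labelCL ν)) k + 1 := lt_add_one _
      _ ≤ hNil k (Ordinal.omega0 * (k : Ordinal)) := hNil_step hlab
  · -- main case
    obtain ⟨r, hrT⟩ := ErecAux_singleton hk R M hM
    have hshape2 : l.1 ≠ [] ∧ ν = (l.1 ++ [y], l.2 ++ [c]) := by
      rcases hshape with ⟨rfl, -⟩ | h
      · exfalso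
        exact hnoext ⟨([r], []), hrT, ⟨r, Or.inl ⟨rfl, rfl⟩⟩⟩
      · exact h
    obtain ⟨hlne, hνeq⟩ := hshape2
    have hlen : l.1.length = l.2.length + 1 := by
      rcases hcl l hlT with ⟨h1, -⟩ | h1
      · exact absurd h1 hlne
      · exact h1
    have hlnotnil : l ≠ nilCL := by
      intro h; rw [h] at hlne; exact hlne rfl
    -- IsRCL of ν from invariants of (y :: M)
    have hrclν : IsRCL R ν := by
      have := (ErecAux_inv hk R (y :: M) hp).2.2.2.1
      rw [erecAux_cons] at this
      exact this ν (Or.inr rfl)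
    have hlab : labelCL ν < labelCL l := by
      rw [hνeq]
      exact labelCL_lt hk hR hlen (hνeq ▸ hrclν)
    have hrne : (([r], []) : CL (Fin k → ℕ) k) ≠ nilCL := by
      intro h
      have : ([r] : List (Fin k → ℕ)) = [] := congrArg Prod.fst h
      simp at this
    have hT'fin : (T ∪ {ν} : Set (CL (Fin k → ℕ) k)).Finite :=
      hfin.union (Set.finite_singleton _)
    have hlc : (l, c) ∈ vacant T := ⟨hlT, hlnotnil, hnoext⟩
    -- key set identity
    have hvac : vacant (T ∪ {ν}) =
        (vacant T \ {(l, c)}) ∪ {ν} ×ˢ (Set.univ : Set (Fin k)) := by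
      ext ⟨m, c''⟩
      simp only [vacant, Set.mem_setOf_eq, Set.mem_union, Set.mem_diff,
        Set.mem_singleton_iff, Set.mem_prod, Set.mem_univ, and_true, Prod.mk.injEq]
      constructor
      · rintro ⟨hm, hmnil, hnoex⟩
        rcases hm with hm | hm
        · left
          refine ⟨⟨hm, hmnil, fun ⟨μ, hμ, he⟩ => hnoex ⟨μ, Or.inl hμ, he⟩⟩, ?_⟩
          rintro ⟨rfl, rfl⟩
          exact hnoex ⟨ν, Or.inr rfl, ⟨y, Or.inr ⟨hlne, by rw [hνeq]; exact ⟨rfl, rfl⟩⟩⟩⟩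
        · right; exact hm
      · rintro (⟨⟨hm, hmnil, hnoex⟩, hne⟩ | rfl)
        · refine ⟨Or.inl hm, hmnil, ?_⟩
          rintro ⟨μ, hμ, y', hca⟩
          have hm1 : m.1 ≠ [] := by
            intro h0
            exact hmnil (nilCL_first (hcl m hm) h0)
          rcases hca with ⟨h1, -⟩ | ⟨-, h1, h2⟩
          · exact hm1 h1
          · rcases hμ with hμ | hμ
            · exact hnoex ⟨μ, hμ, ⟨y', Or.inr ⟨hm1, h1, h2⟩⟩⟩
            · rw [show μ = ν from hμ, hνeq] at h1 h2
              simp only at h1 h2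
              obtain ⟨hfst, -⟩ := List.append_inj' h1 rfl
              obtain ⟨hsnd, hcc⟩ := List.append_inj' h2 rfl
              apply hne
              constructor
              · obtain ⟨m1, m2⟩ := m
                obtain ⟨l1, l2⟩ := l
                simp only at hfst hsnd
                rw [hfst, hsnd]
              · have : c'' = c := by simpa using hcc.symm
                exact this
        · exact ⟨Or.inr rfl, hνnotnil, hnoextν c''⟩
    -- Finset versions
    set V : Finset (CL (Fin k → ℕ) k × Fin k) := (vacant_finite hfin).toFinset with hV
    set g : CL (Fin k → ℕ) k × Fin k → NatOrdinal :=
      fun p => Ordinal.toNatOrdinal (hNil k (labelCL p.1)) with hg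
    have hVlc : (l, c) ∈ V := by rw [hV, Set.Finite.mem_toFinset]; exact hlc
    have hhatT : hhat T = NatOrdinal.toOrdinal (∑ p ∈ V, g p) := by
      rw [hhat, if_neg]
      · congr 1
        rw [finsum_mem_eq_finite_toFinset_sum _ (vacant_finite hfin)]
      · intro hall
        exact hrne (hall _ hrT)
    have hfs' : (vacant_finite hT'fin).toFinset =
        V.erase (l, c) ∪ ({ν} : Finset (CL (Fin k → ℕ) k)) ×ˢ (Finset.univ : Finset (Fin k)) := by
      apply Finset.ext
      intro p
      rw [Set.Finite.mem_toFinset, hvac]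
      simp only [Finset.mem_union, Finset.mem_erase, Set.Finite.mem_toFinset,
        Finset.mem_product, Finset.mem_singleton, Finset.mem_univ, and_true,
        Set.mem_union, Set.mem_diff, Set.mem_singleton_iff, Set.mem_prod, Set.mem_univ,
        and_true, hV]
      tauto
    have hdisj : Disjoint (V.erase (l, c))
        (({ν} : Finset (CL (Fin k → ℕ) k)) ×ˢ (Finset.univ : Finset (Fin k))) := by
      rw [Finset.disjoint_left]
      rintro ⟨m, c''⟩ hm hm'
      simp only [Finset.mem_product, Finset.mem_singleton] at hm'
      have hmV : (m, c'') ∈ V := (Finset.mem_erase.1 hm).2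
      rw [hV, Set.Finite.mem_toFinset] at hmV
      exact hνnotT (hm'.1 ▸ hmV.1)
    have hhatT' : hhat (T ∪ {ν}) =
        NatOrdinal.toOrdinal (∑ p ∈ V.erase (l, c), g p +
          k • Ordinal.toNatOrdinal (hNil k (labelCL ν))) := by
      rw [hhat, if_neg]
      · congr 1
        rw [finsum_mem_eq_finite_toFinset_sum _ (vacant_finite hT'fin), hfs',
          Finset.sum_union hdisj, Finset.sum_product, Finset.sum_singleton]
        simp [Finset.sum_const, Fintype.card_fin, hg]
      · intro hall
        exact hνnotnil (hall ν (Or.inr rfl))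
    rw [hcons, hhatT, hhatT']
    have hsumV : ∑ p ∈ V, g p = ∑ p ∈ V.erase (l, c), g p + g (l, c) :=
      (Finset.sum_erase_add V g hVlc).symm
    rw [hsumV]
    have hkey : NatOrdinal.toOrdinal (k • Ordinal.toNatOrdinal (hNil k (labelCL ν)))
        < NatOrdinal.toOrdinal (g (l, c)) := by
      have h1 : NatOrdinal.toOrdinal (k • Ordinal.toNatOrdinal (hNil k (labelCL ν)))
          = nmulNat (hNil k (labelCL ν)) k := by rw [toOrdinal_nsmul, toOrd_toNat]
      have h2 : nmulNat (hNil k (labelCL ν)) k < hNil k (labelCL l) :=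
        lt_of_lt_of_le (lt_add_one _) (hNil_step hlab)
      rw [h1]
      show nmulNat _ k < NatOrdinal.toOrdinal (Ordinal.toNatOrdinal (hNil k (labelCL (l, c).1)))
      rw [toOrd_toNat]
      exact h2
    exact toOrd_add_lt _ _ _ hkey

end Main

/-- over `I = ℕ^k` with `R h y z ↔ y h < z h`, the map
`f*(s) = ĥ(E(s)) = h_k(E(s)_α, ω·k)` on `H(R₁ ∪ ⋯ ∪ R_k)` takes values in `ω^k + 1`
(i.e. `f*(s) ≤ ω^k`) and is strictly decreasing along one-step extensions:
if `L' ≻ L` then `f*(L') < f*(L)`. -/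
theorem stmt_15 (k : ℕ) (hk : 0 < k)
    (R : Fin k → (Fin k → ℕ) → (Fin k → ℕ) → Prop)
    (hR : ∀ (h : Fin k) (y z : Fin k → ℕ), R h y z ↔ y h < z h) :
    (∀ L L' : List (Fin k → ℕ),
      L ∈ HSet (fun x y => ∃ i, R i x y) → L' ∈ HSet (fun x y => ∃ i, R i x y) →
      (∃ y, L' = L ++ [y]) → hhat (Etree hk R L') < hhat (Etree hk R L)) ∧
    (∀ L ∈ HSet (fun x y => ∃ i, R i x y),
      hhat (Etree hk R L) ≤ Ordinal.omega0 ^ (k : Ordinal)) := by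
  
  have step : ∀ (L : List (Fin k → ℕ)) (y : Fin k → ℕ),
      (L ++ [y]) ∈ HSet (fun x z => ∃ i, R i x z) →
      hhat (Etree hk R (L ++ [y])) < hhat (Etree hk R L) := by
    intro L y hmem
    have hrev : (L ++ [y]).reverse = y :: L.reverse := by simp
    have hp : (y :: L.reverse).Pairwise (fun a b => ∃ i, R i a b) := by
      rw [← hrev, List.pairwise_reverse]
      exact hmem
    unfold Etree
    rw [hrev]
    exact main_step hk hR L.reverse y hp
  constructor
  · rintro L L' hL hL' ⟨y, rfl⟩
    exact step L y hL'
  · intro L hL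
    induction L using List.reverseRecOn with
    | nil =>
      have hnil : hhat (Etree hk R ([] : List (Fin k → ℕ)))
          = hNil k (Ordinal.omega0 * (k : Ordinal)) := by
        unfold Etree
        rw [hhat, if_pos]
        rintro μ (rfl : μ = nilCL)
        rfl
      rw [hnil]
      exact hNil_omega0_mul_le hk
    | append_singleton L y IH =>
      have hLmem : L ∈ HSet (fun x z => ∃ i, R i x z) :=
        List.Pairwise.sublist (List.sublist_append_left L [y]) hL
      exact le_of_lt (lt_of_lt_of_le (step L y hL) (IH hLmem))
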